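/- Let (P,𝓜) be a refined pircon with rank function ρ, and let (R^q_{u,w}) and (R^{−1}_{u,w}) be its Kazhdan–Lusztig R^x-polynomials for x = q and x = −1 (both with respect to the same refinement 𝓜). Then for all u, w ∈ P with u ≤ w: (1) deg R^{−1}_{u,w} = ρ(u,w); (2) R^q_{u,w}(0) = (−1)^{ρ(u,w)}; (3) R^x_{u,w}(q) = (−q)^{ρ(u,w)} · R^z_{u,w}(q^{−1}) in ℤ[q,q^{−1}], where {x,z} = {q,−1}. -/

import Mathlib

open Polynomial LaurentPolynomial

/-- A quasi special partial matching of the order ideal `P_{≤w}`. -/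
def IsQSPMOn {P : Type*} [PartialOrder P] (w : P) (M : P → P) : Prop :=
  (∀ u : P, u ≤ w → M u ≤ w) ∧
  (∀ u : P, u ≤ w → M (M u) = u) ∧
  (∀ u : P, u ≤ w → M u ⋖ u ∨ M u = u ∨ u ⋖ M u) ∧
  ∀ u t : P, u ≤ w → t ≤ w → u ⋖ t → M u ≠ t → M u < M t

/-- A special partial matching of the order ideal `P_{≤w}` (whose maximum is `w`). -/
def IsSPMOn {P : Type*} [PartialOrder P] (w : P) (M : P → P) : Prop :=
  IsQSPMOn w M ∧ M w ⋖ w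

/-- A pircon: for every non-minimal `x`, the order ideal `P_{≤x}` is finite and admits
a special partial matching. -/
def IsPircon (P : Type*) [PartialOrder P] : Prop :=
  ∀ x : P, ¬ IsMin x → (Set.Iic x).Finite ∧ ∃ M : P → P, IsSPMOn x M

/-- The family of Kazhdan--Lusztig `R^x`-polynomials of a refined pircon `(P, 𝓜)`,
where `MM w` is the chosen special partial matching of `P_{≤w}` for `w ≠ ⊥`, and
`x ∈ {q, -1} ⊆ ℤ[q]` (here `q` is the polynomial variable `X`). -/
def IsRefinedKLR {P : Type*} [PartialOrder P] [OrderBot P] (MM : P → P → P)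
    (x : Polynomial ℤ) (R : P → P → Polynomial ℤ) : Prop :=
  (∀ u w : P, ¬ u ≤ w → R u w = 0) ∧
  (∀ w : P, R w w = 1) ∧
  ∀ w : P, w ≠ ⊥ → ∀ u : P, u ≤ w →
    (MM w u ⋖ u → R u w = R (MM w u) (MM w w)) ∧
    (u ⋖ MM w u → R u w = (X - 1) * R u (MM w w) + X * R (MM w u) (MM w w)) ∧
    (MM w u = u → R u w = (X - 1 - x) * R u (MM w w))


section Aux
variable {P : Type*} [PartialOrder P]

/-- cover existence above -/
lemma exists_cover_above {w a c : P} (hfin : (Set.Iic w).Finite)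
    (hac : a < c) (hc : c ≤ w) : ∃ t, a ⋖ t ∧ t ≤ c := by
  have hS : {t : P | a < t ∧ t ≤ c}.Finite :=
    hfin.subset (fun t ht => le_trans ht.2 hc)
  obtain ⟨t, ht, hmin'⟩ := Set.Finite.exists_minimal hS ⟨c, hac, le_rfl⟩
  have hmin : ∀ z ∈ {t : P | a < t ∧ t ≤ c}, z ≤ t → t = z :=
    fun z hz h => le_antisymm (hmin' hz h) h
  refine ⟨t, ⟨ht.1, fun z hz hzt => ?_⟩, ht.2⟩
  have : t = z := hmin z ⟨hz, le_trans hzt.le ht.2⟩ hzt.le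
  exact absurd (this ▸ hzt) (lt_irrefl t)

/-- cover existence below -/
lemma exists_cover_below {w a c : P} (hfin : (Set.Iic w).Finite)
    (hac : a < c) (hc : c ≤ w) : ∃ t, a ≤ t ∧ t ⋖ c := by
  have hS : {t : P | a ≤ t ∧ t < c}.Finite :=
    hfin.subset (fun t ht => le_trans ht.2.le hc)
  obtain ⟨t, ht, hmax'⟩ := Set.Finite.exists_maximal hS ⟨a, le_rfl, hac⟩
  have hmax : ∀ z ∈ {t : P | a ≤ t ∧ t < c}, t ≤ z → t = z :=
    fun z hz h => le_antisymm h (hmax' hz h)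
  refine ⟨t, ht.1, ht.2, fun z hz hzc => ?_⟩
  have : t = z := hmax z ⟨le_trans ht.1 hz.le, hzc⟩ hz.le
  exact absurd (this ▸ hz) (lt_irrefl t)

lemma rho_lt_of_lt (ρ : P → ℕ) (hρcov : ∀ a b : P, a ⋖ b → ρ b = ρ a + 1)
    (hP : IsPircon P) {a b : P} (hab : a < b) : ρ a < ρ b := by
  have hnm : ¬ IsMin b := fun h => absurd (h hab.le) (not_le_of_gt hab)
  obtain ⟨hfin, -⟩ := hP b hnm
  have key : ∀ c : Set.Iic b, ∀ a : P, a < (c : P) → ρ a < ρ (c : P) := by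
    have : Finite (Set.Iic b) := hfin.to_subtype
    intro c
    induction c using WellFoundedLT.induction with
    | _ c IH =>
      intro a hac
      obtain ⟨t, hat, htc⟩ := exists_cover_below hfin hac c.2
      have hrt : ρ (c : P) = ρ t + 1 := hρcov _ _ htc
      rcases eq_or_lt_of_le hat with rfl | hat'
      · omega
      · have htb : t ∈ Set.Iic b := le_trans htc.le c.2
        have h2 : ρ a < ρ t := IH ⟨t, htb⟩ (by exact htc.lt) a hat'
        omega
  exact key ⟨b, le_rfl⟩ a hab

lemma rho_le_of_le (ρ : P → ℕ) (hρcov : ∀ a b : P, a ⋖ b → ρ b = ρ a + 1)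
    (hP : IsPircon P) {a b : P} (hab : a ≤ b) : ρ a ≤ ρ b := by
  rcases eq_or_lt_of_le hab with rfl | h
  · exact le_rfl
  · exact (rho_lt_of_lt ρ hρcov hP h).le

/-- The lifting property of special partial matchings. -/
lemma spm_lifting (ρ : P → ℕ) (hρcov : ∀ a b : P, a ⋖ b → ρ b = ρ a + 1)
    (hP : IsPircon P) {w : P} (hfin : (Set.Iic w).Finite) {M : P → P}
    (hM : IsSPMOn w M) :
    ∀ n : ℕ, ∀ u, u ≤ w → u ≠ w → ρ w ≤ ρ u + n →
      (u ≤ M u → u ≤ M w) ∧ (M u < u → M u ≤ M w) := by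
  obtain ⟨⟨hMle, hMinv, hMtri, hMcov⟩, hMw⟩ := hM
  intro n
  induction n with
  | zero =>
    intro u huw hne hb
    exact absurd hb (by simpa using rho_lt_of_lt ρ hρcov hP (huw.lt_of_ne hne))
  | succ n IH =>
    intro u huw hne hb
    have hult : u < w := huw.lt_of_ne hne
    obtain ⟨t, hut, htw⟩ := exists_cover_above hfin hult le_rfl
    have hρt : ρ t = ρ u + 1 := hρcov _ _ hut
    have hb' : ρ w ≤ ρ t + n := by omega
    constructor
    · intro hu
      by_cases hMuw : M u = w
      · have : u = M w := by rw [← hMinv u huw, hMuw]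
        exact this.le
      by_cases hMut : M u = t
      · have htne : t ≠ w := fun h => hMuw (hMut.trans h)
        have hMt : M t = u := by rw [← hMut, hMinv u huw]
        exact hMt ▸ (IH t htw htne hb').2 (hMt ▸ hut.lt)
      · have hlt : M u < M t := hMcov u t huw htw hut hMut
        rcases hMtri t htw with h | h | h
        · by_cases htw' : t = w
          · subst htw'
            exact (lt_of_le_of_lt hu hlt).le
          · exact le_trans (lt_of_le_of_lt hu hlt).le ((IH t htw htw' hb').2 h.lt)
        · have htw' : t ≠ w := by
            rintro rfl
            rw [h] at hMw
            exact absurd hMw.lt (lt_irrefl t)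
          exact le_trans hut.le ((IH t htw htw' hb').1 h.ge)
        · have htw' : t ≠ w := by
            rintro rfl
            exact absurd (hMle t le_rfl) (not_le_of_gt h.lt)
          exact le_trans hut.le ((IH t htw htw' hb').1 h.lt.le)
    · intro hMu
      have hMut : M u ≠ t := ne_of_lt (hMu.trans hut.lt)
      have hlt : M u < M t := hMcov u t huw htw hut hMut
      rcases hMtri t htw with h | h | h
      · by_cases htw' : t = w
        · subst htw'
          exact hlt.le
        · exact le_trans hlt.le ((IH t htw htw' hb').2 h.lt)
      · have htw' : t ≠ w := by
          rintro rfl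
          rw [h] at hMw
          exact absurd hMw.lt (lt_irrefl t)
        exact le_trans (lt_of_lt_of_le hlt h.le).le ((IH t htw htw' hb').1 h.ge)
      · have htw' : t ≠ w := by
          rintro rfl
          exact absurd (hMle t le_rfl) (not_le_of_gt h.lt)
        exact le_trans (hMu.trans hut.lt).le ((IH t htw htw' hb').1 h.lt.le)

end Aux


lemma klr_main {P : Type*} [PartialOrder P] [OrderBot P]
    (ρ : P → ℕ) (hρcov : ∀ a b : P, a ⋖ b → ρ b = ρ a + 1)
    (hP : IsPircon P)
    (MM : P → P → P) (hMM : ∀ w : P, w ≠ ⊥ → IsSPMOn w (MM w))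
    (Rq Rm : P → P → Polynomial ℤ)
    (hRq : IsRefinedKLR MM X Rq) (hRm : IsRefinedKLR MM (-1) Rm) :
    ∀ n : ℕ, ∀ w u : P, u ≤ w → ρ w ≤ n →
      (Rm u w).degree = ((ρ w - ρ u : ℕ) : WithBot ℕ) ∧
      (Rq u w).eval 0 = (-1) ^ (ρ w - ρ u) ∧
      toLaurent (Rq u w) = (-T 1) ^ (ρ w - ρ u) * invert (toLaurent (Rm u w)) ∧
      toLaurent (Rm u w) = (-T 1) ^ (ρ w - ρ u) * invert (toLaurent (Rq u w)) := by
  have hab : (T 1 : LaurentPolynomial ℤ) * T (-1) = 1 := by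
    rw [← T_add]; norm_num
  have hcast : ∀ k : ℕ, (1 : WithBot ℕ) + (k : WithBot ℕ) = ((k + 1 : ℕ) : WithBot ℕ) := by
    intro k; rw [Nat.cast_add, Nat.cast_one, add_comm]
  intro n
  induction n with
  | zero =>
    intro w u huw hn
    by_cases hne : u = w
    · subst hne
      simp [hRq.2.1, hRm.2.1, Nat.sub_self]
    · have := rho_lt_of_lt ρ hρcov hP (huw.lt_of_ne hne); omega
  | succ n IH =>
    intro w u huw hn
    by_cases hne : u = w
    · subst hne
      simp [hRq.2.1, hRm.2.1, Nat.sub_self]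
    · have hult : u < w := huw.lt_of_ne hne
      have hw : w ≠ ⊥ := by
        rintro rfl
        exact hne (le_bot_iff.mp huw)
      have hnm : ¬ IsMin w := fun h => hw h.eq_bot
      obtain ⟨hfin, -⟩ := hP w hnm
      have hM := hMM w hw
      have hvw : MM w w ⋖ w := hM.2
      have hρw : ρ w = ρ (MM w w) + 1 := hρcov _ _ hvw
      have hρn : ρ (MM w w) ≤ n := by omega
      have lift := spm_lifting ρ hρcov hP hfin hM (ρ w) u huw hne (by omega)
      have hrq := hRq.2.2 w hw u huw
      have hrm := hRm.2.2 w hw u huw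
      rcases hM.1.2.2.1 u huw with hc | hc | hc
      · -- Case A : (MM w u) ⋖ u
        have hMuv : (MM w u) ≤ (MM w w) := lift.2 hc.lt
        have hρu : ρ u = ρ ((MM w u)) + 1 := hρcov _ _ hc
        have harith : ρ w - ρ u = ρ (MM w w) - ρ ((MM w u)) := by omega
        rw [hrq.1 hc, hrm.1 hc, harith]
        exact IH (MM w w) ((MM w u)) hMuv hρn
      · -- Case B : (MM w u) = u
        have huv : u ≤ (MM w w) := lift.1 hc.ge
        have heρ : ρ u ≤ ρ (MM w w) := rho_le_of_le ρ hρcov hP huv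
        obtain ⟨Dm, E1, L1, L2⟩ := IH (MM w w) u huv hρn
        set e := ρ (MM w w) - ρ u with he
        have hd : ρ w - ρ u = e + 1 := by omega
        have hq : Rq u w = -Rq u (MM w w) := by rw [(hrq.2.2) hc]; ring
        have hm : Rm u w = X * Rm u (MM w w) := by rw [(hrm.2.2) hc]; ring
        refine ⟨?_, ?_, ?_, ?_⟩
        · rw [hm, hd, degree_mul, degree_X, Dm, hcast]
        · rw [hq, hd, eval_neg, E1, pow_succ]; ring
        · rw [hq, hm, hd]
          simp only [map_neg, map_mul, toLaurent_X, invert_T]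
          rw [L1]
          linear_combination ((-T 1 : LaurentPolynomial ℤ) ^ e *
            invert (toLaurent (Rm u (MM w w)))) * hab
        · rw [hq, hm, hd]
          simp only [map_neg, map_mul, toLaurent_X, invert_T]
          rw [L2]
          ring
      · -- Case C : u ⋖ (MM w u)
        have huv : u ≤ (MM w w) := lift.1 hc.lt.le
        have heρ : ρ u ≤ ρ (MM w w) := rho_le_of_le ρ hρcov hP huv
        obtain ⟨Dm1, E1, L11, L12⟩ := IH (MM w w) u huv hρn
        set e := ρ (MM w w) - ρ u with he
        have hevρ : ρ (MM w w) = ρ u + e := by omega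
        have hd : ρ w - ρ u = e + 1 := by omega
        have hρMu : ρ ((MM w u)) = ρ u + 1 := hρcov _ _ hc
        have hq := (hrq.2.1) hc
        have hm := (hrm.2.1) hc
        have hdegX1 : Polynomial.degree ((X : Polynomial ℤ) - 1) = 1 := by
          simpa using degree_X_sub_C (1 : ℤ)
        by_cases hBv : (MM w u) ≤ (MM w w)
        · obtain ⟨Dm2, E2, L21, L22⟩ := IH (MM w w) ((MM w u)) hBv hρn
          have hfρ : ρ ((MM w u)) ≤ ρ (MM w w) := rho_le_of_le ρ hρcov hP hBv
          set f := ρ (MM w w) - ρ ((MM w u)) with hf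
          have hef : e = f + 1 := by omega
          have hA : Polynomial.degree ((X - 1) * Rm u (MM w w)) = ((e + 1 : ℕ) : WithBot ℕ) := by
            rw [degree_mul, hdegX1, Dm1, hcast]
          have hB : Polynomial.degree (X * Rm ((MM w u)) (MM w w)) = ((f + 1 : ℕ) : WithBot ℕ) := by
            rw [degree_mul, degree_X, Dm2, hcast]
          refine ⟨?_, ?_, ?_, ?_⟩
          · rw [hm, hd, degree_add_eq_left_of_degree_lt, hA]
            rw [hA, hB]
            exact_mod_cast (by omega : f + 1 < e + 1)
          · rw [hq, hd]
            simp only [eval_add, eval_mul, eval_sub, eval_X, eval_one, E1, E2]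
            ring
          · rw [hq, hm, hd, hef]
            simp only [map_add, map_mul, map_sub, map_one, toLaurent_X, invert_T]
            rw [L11, L21, hef]
            linear_combination (-((-T 1 : LaurentPolynomial ℤ) ^ f * T 1 *
              (invert (toLaurent (Rm u (MM w w))) + invert (toLaurent (Rm ((MM w u)) (MM w w)))))) * hab
          · rw [hq, hm, hd, hef]
            simp only [map_add, map_mul, map_sub, map_one, toLaurent_X, invert_T]
            rw [L12, L22, hef]
            linear_combination (-((-T 1 : LaurentPolynomial ℤ) ^ f * T 1 *
              (invert (toLaurent (Rq u (MM w w))) + invert (toLaurent (Rq ((MM w u)) (MM w w)))))) * hab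
        · have hq0 : Rq ((MM w u)) (MM w w) = 0 := hRq.1 _ _ hBv
          have hm0 : Rm ((MM w u)) (MM w w) = 0 := hRm.1 _ _ hBv
          rw [hq0, mul_zero, add_zero] at hq
          rw [hm0, mul_zero, add_zero] at hm
          refine ⟨?_, ?_, ?_, ?_⟩
          · rw [hm, hd, degree_mul, hdegX1, Dm1, hcast]
          · rw [hq, hd]
            simp only [eval_mul, eval_sub, eval_X, eval_one, E1]
            ring
          · rw [hq, hm, hd]
            simp only [map_mul, map_sub, map_one, toLaurent_X, invert_T]
            rw [L11]
            linear_combination ((-T 1 : LaurentPolynomial ℤ) ^ e *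
              invert (toLaurent (Rm u (MM w w)))) * hab
          · rw [hq, hm, hd]
            simp only [map_mul, map_sub, map_one, toLaurent_X, invert_T]
            rw [L12]
            linear_combination ((-T 1 : LaurentPolynomial ℤ) ^ e *
              invert (toLaurent (Rq u (MM w w)))) * hab

/-- Properties of the two families of Kazhdan--Lusztig `R`-polynomials of a refined pircon
`(P, 𝓜)`: (1) `deg R^{-1}_{u,w} = ρ(u,w)`; (2) `R^q_{u,w}(0) = (-1)^{ρ(u,w)}`;
(3) `R^x_{u,w}(q) = (-q)^{ρ(u,w)} · R^z_{u,w}(q⁻¹)` in `ℤ[q,q⁻¹]` for `{x,z} = {q,-1}`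
(the involution `q ↦ q⁻¹` of `ℤ[q,q⁻¹]` being `LaurentPolynomial.invert`). -/
theorem refinedKLR_properties {P : Type*} [PartialOrder P] [OrderBot P]
    (ρ : P → ℕ) (hρ0 : ρ (⊥ : P) = 0) (hρcov : ∀ a b : P, a ⋖ b → ρ b = ρ a + 1)
    (hP : IsPircon P)
    (MM : P → P → P) (hMM : ∀ w : P, w ≠ ⊥ → IsSPMOn w (MM w))
    (Rq Rm : P → P → Polynomial ℤ)
    (hRq : IsRefinedKLR MM X Rq) (hRm : IsRefinedKLR MM (-1) Rm)
    {u w : P} (huw : u ≤ w) :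
    (Rm u w).degree = ((ρ w - ρ u : ℕ) : WithBot ℕ) ∧
    (Rq u w).eval 0 = (-1) ^ (ρ w - ρ u) ∧
    toLaurent (Rq u w) = (-T 1) ^ (ρ w - ρ u) * invert (toLaurent (Rm u w)) ∧
    toLaurent (Rm u w) = (-T 1) ^ (ρ w - ρ u) * invert (toLaurent (Rq u w)) :=
  klr_main ρ hρcov hP MM hMM Rq Rm hRq hRm (ρ w) w u huw le_rfl
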